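/- Let (Ω, ℱ, P) be a probability space with Ω a standard Borel space, 𝒳 a standard Borel space, X : Ω → 𝒳 measurable, A : Ω → {−1, 1} a random variable, and T₁, T₋₁ integrable real random variables such that A is conditionally independent of the pair (T₁, T₋₁) given σ(X). Define T = T₁·1{A = 1} + T₋₁·1{A = −1}. Let π : {−1,1} × 𝒳 → ℝ be measurable with η ≤ π(a, x) ≤ 1 for all (a, x) and some η > 0, and such that for each a ∈ {−1, 1}, ω ↦ π(a, X(ω)) is a version of the conditional probability P(A = a ∣ σ(X)). Then for every measurable d : 𝒳 → {−1, 1}, E[T₁·1{d(X) = 1} + T₋₁·1{d(X) = −1}] = E[1{A = d(X)} · T / π(A, X)]. -/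

import Mathlib

open MeasureTheory ProbabilityTheory

lemma my_int_mul_bdd {Ω : Type*} {mΩ : MeasurableSpace Ω} {μ : Measure Ω} {f g : Ω → ℝ}
    (hf : Integrable f μ) (hg : AEStronglyMeasurable g μ) {C : ℝ}
    (hC : ∀ᵐ ω ∂μ, |g ω| ≤ C) : Integrable (fun ω => f ω * g ω) μ :=
  (Integrable.bdd_mul hf hg (by simpa [Real.norm_eq_abs] using hC)).congr
    (Filter.Eventually.of_forall fun ω => mul_comm _ _)

lemma my_pullout {Ω : Type*} {m mΩ : MeasurableSpace Ω} (hm : m ≤ mΩ)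
    (μ : Measure Ω) [IsFiniteMeasure μ] {k g : Ω → ℝ}
    (hk : StronglyMeasurable[m] k) (hkg : Integrable (fun ω => k ω * g ω) μ)
    (hg : Integrable g μ) :
    ∫ ω, k ω * g ω ∂μ = ∫ ω, k ω * (μ[g|m]) ω ∂μ := by
  have h1 : μ[k * g|m] =ᵐ[μ] k * μ[g|m] := condExp_mul_of_stronglyMeasurable_left hk hkg hg
  calc ∫ ω, k ω * g ω ∂μ = ∫ ω, (k * g) ω ∂μ := rfl
    _ = ∫ ω, (μ[k * g|m]) ω ∂μ := (integral_condExp hm).symm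
    _ = ∫ ω, (k * μ[g|m]) ω ∂μ := integral_congr_ae h1
    _ = ∫ ω, k ω * (μ[g|m]) ω ∂μ := rfl

lemma my_key {Ω : Type*} {m n : MeasurableSpace Ω} {mΩ : MeasurableSpace Ω}
    (μ : Measure Ω) [IsProbabilityMeasure μ] (hm : m ≤ mΩ) (hn : n ≤ mΩ)
    {B : Set Ω} (hB : MeasurableSet B)
    (hset : ∀ s : Set Ω, MeasurableSet[n] s →
      (μ[(B ∩ s).indicator (fun _ => (1:ℝ))|m]) =ᵐ[μ]
        fun ω => (μ[B.indicator (fun _ => (1:ℝ))|m]) ω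
          * (μ[s.indicator (fun _ => (1:ℝ))|m]) ω)
    {f : Ω → ℝ} (hf : Integrable f μ) (hfn : StronglyMeasurable[n] f)
    {h : Ω → ℝ} (hh : StronglyMeasurable[m] h) {C : ℝ} (hC : ∀ ω, |h ω| ≤ C) :
    ∫ ω, f ω * (B.indicator (fun _ => (1:ℝ)) ω * h ω) ∂μ
      = ∫ ω, f ω * ((μ[B.indicator (fun _ => (1:ℝ))|m]) ω * h ω) ∂μ := by
  set iB : Ω → ℝ := B.indicator (fun _ => (1:ℝ)) with hiB_def
  set q : Ω → ℝ := μ[iB|m] with hq_def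
  -- basic facts
  have hiB_bdd : ∀ ω, |iB ω| ≤ 1 := by
    intro ω; by_cases hω : ω ∈ B <;> simp [hiB_def, Set.indicator_apply, hω]
  have hiB_meas : AEStronglyMeasurable iB μ := by
    exact
    ((stronglyMeasurable_const.indicator hB)).aestronglyMeasurable
  have hiB_int : Integrable iB μ := (integrable_const (1:ℝ)).indicator hB
  have hh_meas : AEStronglyMeasurable h μ := (hh.mono hm).aestronglyMeasurable
  have hq_meas : AEStronglyMeasurable q μ :=
    (stronglyMeasurable_condExp.mono hm).aestronglyMeasurable
  have hq_int : Integrable q μ := integrable_condExp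
  have hq01 : ∀ᵐ ω ∂μ, |q ω| ≤ 1 := by
    have h0 : (0 : Ω → ℝ) ≤ᵐ[μ] q := by
      refine condExp_nonneg ?_
      exact Filter.Eventually.of_forall fun ω => Set.indicator_nonneg (fun _ _ => zero_le_one) ω
    have h1 : q ≤ᵐ[μ] μ[(fun _ => (1:ℝ))|m] := by
      refine condExp_mono hiB_int (integrable_const 1) ?_
      exact Filter.Eventually.of_forall fun ω => Set.indicator_le_self' (fun _ _ => zero_le_one) ω
    rw [condExp_const hm] at h1
    filter_upwards [h0, h1] with ω h0ω h1ω
    simp only [Pi.zero_apply] at h0ω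
    rw [abs_le]; exact ⟨by linarith, h1ω⟩
  have hiBh_bdd : ∀ ω, |iB ω * h ω| ≤ C := fun ω => by
    rw [abs_mul]
    exact le_trans (mul_le_of_le_one_left (abs_nonneg _) (hiB_bdd ω)) (hC ω)
  have hiBh_int : Integrable (fun ω => iB ω * h ω) μ :=
    my_int_mul_bdd hiB_int hh_meas (Filter.Eventually.of_forall hC)
  have hqh_int : Integrable (fun ω => q ω * h ω) μ :=
    my_int_mul_bdd hq_int hh_meas (Filter.Eventually.of_forall hC)
  have hqh_bdd : ∀ᵐ ω ∂μ, |q ω * h ω| ≤ C := by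
    filter_upwards [hq01] with ω hq1
    rw [abs_mul]
    calc |q ω| * |h ω| ≤ 1 * |h ω| := by
          exact mul_le_mul_of_nonneg_right hq1 (abs_nonneg _)
      _ = |h ω| := one_mul _
      _ ≤ C := hC ω
  -- Step 1: set integrals over n-measurable sets agree
  have step1 : ∀ s : Set Ω, MeasurableSet[n] s →
      ∫ ω in s, iB ω * h ω ∂μ = ∫ ω in s, q ω * h ω ∂μ := by
    intro s hs
    have hsΩ : MeasurableSet s := hn s hs
    set iS : Ω → ℝ := s.indicator (fun _ => (1:ℝ)) with hiS_def
    have hiS_int : Integrable iS μ := (integrable_const (1:ℝ)).indicator hsΩ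
    have hiBS_int : Integrable ((B ∩ s).indicator (fun _ => (1:ℝ))) μ :=
      (integrable_const (1:ℝ)).indicator (hB.inter hsΩ)
    have e1 : ∫ ω in s, iB ω * h ω ∂μ
        = ∫ ω, h ω * (B ∩ s).indicator (fun _ => (1:ℝ)) ω ∂μ := by
      rw [← integral_indicator hsΩ]
      refine integral_congr_ae (Filter.Eventually.of_forall fun ω => ?_)
      by_cases hωs : ω ∈ s <;> by_cases hωB : ω ∈ B <;>
        simp [hiB_def, Set.indicator_apply, hωs, hωB, mul_comm]
    have e2 : ∫ ω, h ω * (B ∩ s).indicator (fun _ => (1:ℝ)) ω ∂μ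
        = ∫ ω, h ω * (μ[(B ∩ s).indicator (fun _ => (1:ℝ))|m]) ω ∂μ := by
      refine my_pullout hm μ hh ?_ hiBS_int
      exact (my_int_mul_bdd hiBS_int hh_meas (Filter.Eventually.of_forall hC)).congr
        (Filter.Eventually.of_forall fun ω => mul_comm _ _)
    have e3 : ∫ ω, h ω * (μ[(B ∩ s).indicator (fun _ => (1:ℝ))|m]) ω ∂μ
        = ∫ ω, (h ω * q ω) * (μ[iS|m]) ω ∂μ := by
      refine integral_congr_ae ?_
      filter_upwards [hset s hs] with ω hω
      rw [hω]; ring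
    have e4 : ∫ ω, (h ω * q ω) * (μ[iS|m]) ω ∂μ = ∫ ω, (h ω * q ω) * iS ω ∂μ := by
      refine (my_pullout hm μ (hh.mul stronglyMeasurable_condExp) ?_ hiS_int).symm
      refine Integrable.bdd_mul (c := C) hiS_int (hh_meas.mul hq_meas) ?_
      filter_upwards [hqh_bdd] with ω hω
      simp only [Real.norm_eq_abs, Pi.mul_apply]
      rw [abs_mul, mul_comm]
      rwa [abs_mul] at hω
    have e5 : ∫ ω, (h ω * q ω) * iS ω ∂μ = ∫ ω in s, q ω * h ω ∂μ := by
      rw [← integral_indicator hsΩ]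
      refine integral_congr_ae (Filter.Eventually.of_forall fun ω => ?_)
      by_cases hωs : ω ∈ s <;> simp [hiS_def, Set.indicator_apply, hωs, mul_comm]
    rw [e1, e2, e3, e4, e5]
  -- Step 2: conditional expectations given n agree
  have step2 : μ[(fun ω => iB ω * h ω)|n] =ᵐ[μ] μ[(fun ω => q ω * h ω)|n] := by
    refine (ae_eq_condExp_of_forall_setIntegral_eq hn hiBh_int
      (fun s _ _ => integrable_condExp.integrableOn) (fun s hs _ => ?_)
      (stronglyMeasurable_condExp.aestronglyMeasurable)).symm
    rw [setIntegral_condExp hn hqh_int hs]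
    exact (step1 s hs).symm
  -- Step 3: multiply by f and integrate
  have hfiBh_int : Integrable (fun ω => f ω * (iB ω * h ω)) μ :=
    my_int_mul_bdd hf (hiB_meas.mul hh_meas) (Filter.Eventually.of_forall hiBh_bdd)
  have hfqh_int : Integrable (fun ω => f ω * (q ω * h ω)) μ :=
    my_int_mul_bdd hf (hq_meas.mul hh_meas) hqh_bdd
  calc ∫ ω, f ω * (iB ω * h ω) ∂μ
      = ∫ ω, f ω * (μ[(fun ω => iB ω * h ω)|n]) ω ∂μ :=
        my_pullout hn μ hfn hfiBh_int hiBh_int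
    _ = ∫ ω, f ω * (μ[(fun ω => q ω * h ω)|n]) ω ∂μ := by
        refine integral_congr_ae ?_
        filter_upwards [step2] with ω hω
        rw [hω]
    _ = ∫ ω, f ω * (q ω * h ω) ∂μ :=
        (my_pullout hn μ hfn hfqh_int hqh_int).symm


/-- Identification of the value function by inverse propensity weighting
(Equation (1) of the paper). With potential outcomes `T₁, T₋₁`, treatment `A` conditionally
independent of `(T₁, T₋₁)` given `σ(X)`, observed outcome
`T = T₁·1{A=1} + T₋₁·1{A=-1}`, and propensity score `π` with
`π(a, X) = P(A = a | σ(X))`, for every measurable rule `d : 𝒳 → {-1,1}`,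
`E[T₁·1{d(X)=1} + T₋₁·1{d(X)=-1}] = E[1{A=d(X)}·T/π(A,X)]`. -/
theorem stmt_6 {Ω 𝒳 : Type*} [mΩ : MeasurableSpace Ω] [StandardBorelSpace Ω]
    [MeasurableSpace 𝒳]
    (P : Measure Ω) [IsProbabilityMeasure P]
    (X : Ω → 𝒳) (hX : Measurable X)
    (A : Ω → ℝ) (hA : Measurable A) (hAval : ∀ ω, A ω = 1 ∨ A ω = -1)
    (T1 Tm1 : Ω → ℝ) (hT1m : Measurable T1) (hTm1m : Measurable Tm1)
    (hT1int : Integrable T1 P) (hTm1int : Integrable Tm1 P)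
    (hindep : CondIndepFun (MeasurableSpace.comap X inferInstance) hX.comap_le
      A (fun ω => (T1 ω, Tm1 ω)) P)
    (π : ℝ × 𝒳 → ℝ) (hπ : Measurable π) (η : ℝ) (hη : 0 < η)
    (hπb : ∀ a x, η ≤ π (a, x) ∧ π (a, x) ≤ 1)
    (hπver : ∀ a : ℝ, (a = 1 ∨ a = -1) →
      (fun ω => π (a, X ω)) =ᵐ[P]
        P[fun ω => if A ω = a then (1 : ℝ) else 0 |
          MeasurableSpace.comap X inferInstance])
    (T : Ω → ℝ)
    (hTdef : ∀ ω, T ω = T1 ω * (if A ω = 1 then (1 : ℝ) else 0)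
      + Tm1 ω * (if A ω = -1 then (1 : ℝ) else 0))
    (d : 𝒳 → ℝ) (hd : Measurable d) (hdval : ∀ x, d x = 1 ∨ d x = -1) :
    ∫ ω, (T1 ω * (if d (X ω) = 1 then (1 : ℝ) else 0)
        + Tm1 ω * (if d (X ω) = -1 then (1 : ℝ) else 0)) ∂P
      = ∫ ω, (if A ω = d (X ω) then (1 : ℝ) else 0) * T ω / π (A ω, X ω) ∂P := by
  classical
  have hm : MeasurableSpace.comap X inferInstance ≤ mΩ := hX.comap_le
  set m := MeasurableSpace.comap X inferInstance with hm_def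
  have hWmeas : Measurable[mΩ] (fun ω => (T1 ω, Tm1 ω)) := hT1m.prodMk hTm1m
  set n := MeasurableSpace.comap (fun ω => (T1 ω, Tm1 ω)) inferInstance with hn_def
  have hn : n ≤ mΩ := hWmeas.comap_le
  have hsetall := (condIndepFun_iff_condExp_inter_preimage_eq_mul
    (hm' := hX.comap_le) hA hWmeas).mp hindep
  -- the propensity-reweighting h functions
  have hφ : ∀ a : ℝ, Measurable (fun x : 𝒳 => (if d x = a then (1:ℝ) else 0) / π (a, x)) := by
    intro a
    refine Measurable.div ?_ (hπ.comp (measurable_const.prodMk measurable_id))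
    exact Measurable.ite (hd (measurableSet_singleton a)) measurable_const measurable_const
  have hππos : ∀ a : ℝ, ∀ x, 0 < π (a, x) := fun a x => lt_of_lt_of_le hη (hπb a x).1
  have hCbound : ∀ a : ℝ, ∀ ω, |(if d (X ω) = a then (1:ℝ) else 0) / π (a, X ω)| ≤ 1/η := by
    intro a ω
    rw [abs_div, abs_of_pos (hππos a (X ω))]
    refine div_le_div₀ (by norm_num) ?_ hη (hπb a (X ω)).1
    split <;> norm_num
  -- main per-treatment-arm identity
  have main : ∀ a : ℝ, (a = 1 ∨ a = -1) → ∀ f : Ω → ℝ, Integrable f P →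
      StronglyMeasurable[n] f →
      ∫ ω, f ω * ((A ⁻¹' {a}).indicator (fun _ => (1:ℝ)) ω
          * ((if d (X ω) = a then (1:ℝ) else 0) / π (a, X ω))) ∂P
        = ∫ ω, f ω * (if d (X ω) = a then (1:ℝ) else 0) ∂P := by
    intro a ha f hfint hfn
    have hB : MeasurableSet[mΩ] (A ⁻¹' {a}) := hA (measurableSet_singleton a)
    have hXm : Measurable[m] X := measurable_iff_comap_le.mpr le_rfl
    have hh_m : StronglyMeasurable[m]
        (fun ω => (if d (X ω) = a then (1:ℝ) else 0) / π (a, X ω)) :=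
      ((hφ a).comp hXm).stronglyMeasurable
    have hset : ∀ s : Set Ω, MeasurableSet[n] s →
        (P[(A ⁻¹' {a} ∩ s).indicator (fun _ => (1:ℝ))|m]) =ᵐ[P]
          fun ω => (P[(A ⁻¹' {a}).indicator (fun _ => (1:ℝ))|m]) ω
            * (P[s.indicator (fun _ => (1:ℝ))|m]) ω := by
      intro s hs
      obtain ⟨t, ht, rfl⟩ := hs
      exact hsetall {a} t (measurableSet_singleton a) ht
    have hkey := my_key (mΩ := mΩ) P hm hn hB hset hfint hfn hh_m (hCbound a)
    have hind_eq : (fun ω => if A ω = a then (1:ℝ) else 0)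
        = (A ⁻¹' {a}).indicator (fun _ => (1:ℝ)) := by
      funext ω; by_cases hω : A ω = a <;> simp [Set.indicator_apply, hω]
    have hπq : (fun ω => π (a, X ω)) =ᵐ[P]
        P[(A ⁻¹' {a}).indicator (fun _ => (1:ℝ))|m] := by
      have := hπver a ha; rwa [hind_eq] at this
    calc ∫ ω, f ω * ((A ⁻¹' {a}).indicator (fun _ => (1:ℝ)) ω
            * ((if d (X ω) = a then (1:ℝ) else 0) / π (a, X ω))) ∂P
        = ∫ ω, f ω * ((P[(A ⁻¹' {a}).indicator (fun _ => (1:ℝ))|m]) ω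
            * ((if d (X ω) = a then (1:ℝ) else 0) / π (a, X ω))) ∂P := hkey
      _ = ∫ ω, f ω * (π (a, X ω)
            * ((if d (X ω) = a then (1:ℝ) else 0) / π (a, X ω))) ∂P := by
          refine integral_congr_ae ?_
          filter_upwards [hπq] with ω hω
          rw [← hω]
      _ = ∫ ω, f ω * (if d (X ω) = a then (1:ℝ) else 0) ∂P := by
          refine integral_congr_ae (Filter.Eventually.of_forall fun ω => ?_)
          show f ω * (π (a, X ω) * ((if d (X ω) = a then (1:ℝ) else 0) / π (a, X ω)))
            = f ω * (if d (X ω) = a then (1:ℝ) else 0)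
          rw [mul_comm (π (a, X ω)), div_mul_cancel₀ _ (ne_of_gt (hππos a (X ω)))]
  -- measurability and integrability of the pieces
  have hind_meas : ∀ a : ℝ, Measurable[mΩ] (fun ω => if d (X ω) = a then (1:ℝ) else 0) :=
    fun a => Measurable.ite ((hd.comp hX) (measurableSet_singleton a))
      measurable_const measurable_const
  have hind_bdd : ∀ a : ℝ, ∀ ω, |if d (X ω) = a then (1:ℝ) else 0| ≤ 1 := by
    intro a ω; split <;> norm_num
  have hint1 : Integrable (fun ω => T1 ω * (if d (X ω) = 1 then (1:ℝ) else 0)) P :=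
    my_int_mul_bdd hT1int (hind_meas 1).aestronglyMeasurable
      (Filter.Eventually.of_forall (hind_bdd 1))
  have hint2 : Integrable (fun ω => Tm1 ω * (if d (X ω) = -1 then (1:ℝ) else 0)) P :=
    my_int_mul_bdd hTm1int (hind_meas (-1)).aestronglyMeasurable
      (Filter.Eventually.of_forall (hind_bdd (-1)))
  have hBH_meas : ∀ a : ℝ, AEStronglyMeasurable[mΩ]
      (fun ω => (A ⁻¹' {a}).indicator (fun _ => (1:ℝ)) ω
        * ((if d (X ω) = a then (1:ℝ) else 0) / π (a, X ω))) P := by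
    intro a
    exact ((measurable_const.indicator (hA (measurableSet_singleton a))).mul
      ((hφ a).comp hX)).aestronglyMeasurable
  have hBH_bdd : ∀ a : ℝ, ∀ ω, |(A ⁻¹' {a}).indicator (fun _ => (1:ℝ)) ω
      * ((if d (X ω) = a then (1:ℝ) else 0) / π (a, X ω))| ≤ 1/η := by
    intro a ω
    rw [abs_mul]
    have h1 : |(A ⁻¹' {a}).indicator (fun _ => (1:ℝ)) ω| ≤ 1 := by
      by_cases hω : ω ∈ A ⁻¹' {a} <;> simp [Set.indicator_apply, hω]
    exact le_trans (mul_le_of_le_one_left (abs_nonneg _) h1) (hCbound a ω)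
  have hint3 : Integrable (fun ω => T1 ω * ((A ⁻¹' {(1:ℝ)}).indicator (fun _ => (1:ℝ)) ω
      * ((if d (X ω) = 1 then (1:ℝ) else 0) / π (1, X ω)))) P :=
    my_int_mul_bdd hT1int (hBH_meas 1) (Filter.Eventually.of_forall (hBH_bdd 1))
  have hint4 : Integrable (fun ω => Tm1 ω * ((A ⁻¹' {(-1:ℝ)}).indicator (fun _ => (1:ℝ)) ω
      * ((if d (X ω) = -1 then (1:ℝ) else 0) / π (-1, X ω)))) P :=
    my_int_mul_bdd hTm1int (hBH_meas (-1)) (Filter.Eventually.of_forall (hBH_bdd (-1)))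
  -- pointwise identity for the right-hand side integrand
  have hptw : ∀ ω, (if A ω = d (X ω) then (1:ℝ) else 0) * T ω / π (A ω, X ω)
      = T1 ω * ((A ⁻¹' {(1:ℝ)}).indicator (fun _ => (1:ℝ)) ω
          * ((if d (X ω) = 1 then (1:ℝ) else 0) / π (1, X ω)))
        + Tm1 ω * ((A ⁻¹' {(-1:ℝ)}).indicator (fun _ => (1:ℝ)) ω
          * ((if d (X ω) = -1 then (1:ℝ) else 0) / π (-1, X ω))) := by
    intro ω
    have hne : (1:ℝ) ≠ -1 := by norm_num
    have hne' : (-1:ℝ) ≠ 1 := by norm_num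
    rcases hAval ω with h1 | h1 <;> rcases hdval (X ω) with h2 | h2 <;>
      simp [hTdef ω, h1, h2, Set.indicator_apply, hne, hne', mul_comm, mul_one_div] <;>
      ring
  -- strong measurability of T1, Tm1 with respect to n
  have hT1n : StronglyMeasurable[n] T1 :=
    (measurable_fst.comp (measurable_iff_comap_le.mpr le_rfl)).stronglyMeasurable
  have hTm1n : StronglyMeasurable[n] Tm1 :=
    (measurable_snd.comp (measurable_iff_comap_le.mpr le_rfl)).stronglyMeasurable
  calc ∫ ω, (T1 ω * (if d (X ω) = 1 then (1 : ℝ) else 0)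
        + Tm1 ω * (if d (X ω) = -1 then (1 : ℝ) else 0)) ∂P
      = (∫ ω, T1 ω * (if d (X ω) = 1 then (1 : ℝ) else 0) ∂P)
        + ∫ ω, Tm1 ω * (if d (X ω) = -1 then (1 : ℝ) else 0) ∂P :=
        integral_add hint1 hint2
    _ = (∫ ω, T1 ω * ((A ⁻¹' {(1:ℝ)}).indicator (fun _ => (1:ℝ)) ω
          * ((if d (X ω) = 1 then (1:ℝ) else 0) / π (1, X ω))) ∂P)
        + ∫ ω, Tm1 ω * ((A ⁻¹' {(-1:ℝ)}).indicator (fun _ => (1:ℝ)) ω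
          * ((if d (X ω) = -1 then (1:ℝ) else 0) / π (-1, X ω))) ∂P := by
        rw [main 1 (Or.inl rfl) T1 hT1int hT1n, main (-1) (Or.inr rfl) Tm1 hTm1int hTm1n]
    _ = ∫ ω, (T1 ω * ((A ⁻¹' {(1:ℝ)}).indicator (fun _ => (1:ℝ)) ω
          * ((if d (X ω) = 1 then (1:ℝ) else 0) / π (1, X ω)))
        + Tm1 ω * ((A ⁻¹' {(-1:ℝ)}).indicator (fun _ => (1:ℝ)) ω
          * ((if d (X ω) = -1 then (1:ℝ) else 0) / π (-1, X ω)))) ∂P :=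
        (integral_add hint3 hint4).symm
    _ = ∫ ω, (if A ω = d (X ω) then (1 : ℝ) else 0) * T ω / π (A ω, X ω) ∂P :=
        integral_congr_ae (Filter.Eventually.of_forall fun ω => (hptw ω).symm)
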